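/- Let T : H → H be a quasi-nonexpansive operator with Fix(T) ≠ ∅ satisfying the demiclosedness principle, let u be a strong global solution of u'(t) = θ(t)(T(u(t)) − u(t)), u(t₀) = u₀ (i.e., with perturbation f ≡ 0), and let û ∈ Fix(T) be such that u(t) converges weakly to û. Suppose I − T is metrically subregular at û for 0 with radius r and modulus κ > 0, and that r > lim_{t→∞} ‖u(t) − û‖. Then there exists t' ≥ t₀ such that for all t ≥ t': dist(u(t), Fix(T)) ≤ ‖u(t') − û‖ · e^{−(1/(2κ²))∫_{t'}^{t} θ(s) ds}. -/

import Mathlib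

open MeasureTheory Filter Set
open scoped RealInnerProductSpace

lemma le_infDist_of {α : Type*} [MetricSpace α] {s : Set α} (hs : s.Nonempty) {x : α} {b : ℝ}
    (h : ∀ y ∈ s, b ≤ dist x y) : b ≤ Metric.infDist x s := by
  rw [Metric.infDist_eq_iInf]
  haveI := hs.to_subtype
  exact le_ciInf fun y => h y y.2

lemma sq_norm_setIntegral {H : Type*} [NormedAddCommGroup H] [InnerProductSpace ℝ H]
    [CompleteSpace H] {f : ℝ → H} {a b : ℝ}
    (hf : IntegrableOn f (Ioc a b) volume) :
    ‖∫ s in Ioc a b, f s‖ ^ 2 = 2 * ∫ s in Ioc a b, ⟪f s, ∫ r in Ioc a s, f r⟫ := by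
  set μ := volume.restrict (Ioc a b) with hμ
  have hfa : AEStronglyMeasurable f μ := hf.aestronglyMeasurable
  set K : ℝ → H := fun s => ∫ r in Ioc a s, f r with hK
  set R : ℝ → H := fun s => ∫ r in Ioc s b, f r with hR
  have hfnorm : Integrable (fun s => ‖f s‖) μ := hf.norm
  set C : ℝ := ∫ s, ‖f s‖ ∂μ with hC
  set I : H := ∫ s, f s ∂μ with hI
  have hKb : ∀ s ∈ Ioc a b, ‖K s‖ ≤ C := by
    intro s hs
    calc ‖K s‖ ≤ ∫ r in Ioc a s, ‖f r‖ := norm_integral_le_integral_norm f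
    _ ≤ C := by
        refine setIntegral_mono_set hfnorm (ae_of_all _ fun r => norm_nonneg _) ?_
        exact HasSubset.Subset.eventuallyLE (Ioc_subset_Ioc_right hs.2)
  have hKcont : ContinuousOn K (Icc a b) := by
    refine intervalIntegral.continuousOn_primitive ?_
    exact (integrableOn_Icc_iff_integrableOn_Ioc).2 hf
  have hIK : Integrable (fun s => ⟪f s, K s⟫) μ := by
    refine Integrable.mono' (hfnorm.mul_const C)
      (hfa.inner ((hKcont.mono Ioc_subset_Icc_self).aestronglyMeasurable measurableSet_Ioc)) ?_
    filter_upwards [ae_restrict_mem measurableSet_Ioc] with s hs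
    calc ‖⟪f s, K s⟫‖ ≤ ‖f s‖ * ‖K s‖ := norm_inner_le_norm _ _
    _ ≤ ‖f s‖ * C := mul_le_mul_of_nonneg_left (hKb s hs) (norm_nonneg _)
  have hIconst : Integrable (fun s => ⟪f s, I⟫) μ := by
    have := MemLp.inner_const (𝕜 := ℝ) (memLp_one_iff_integrable.2 hf) I
    exact memLp_one_iff_integrable.1 this
  have hsplit : ∀ s ∈ Ioc a b, I = K s + R s := by
    intro s hs
    have h1 : IntegrableOn f (Ioc a s) volume := hf.mono_set (Ioc_subset_Ioc_right hs.2)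
    have h2 : IntegrableOn f (Ioc s b) volume := hf.mono_set (Ioc_subset_Ioc_left hs.1.le)
    rw [hI, hμ, ← Ioc_union_Ioc_eq_Ioc hs.1.le hs.2,
      setIntegral_union (Set.Ioc_disjoint_Ioc_of_le le_rfl) measurableSet_Ioc h1 h2]
  have hIR : Integrable (fun s => ⟪f s, R s⟫) μ := by
    refine (hIconst.sub hIK).congr ?_
    filter_upwards [ae_restrict_mem measurableSet_Ioc] with s hs
    have : ⟪f s, I⟫ - ⟪f s, K s⟫ = ⟪f s, R s⟫ := by
      rw [hsplit s hs, inner_add_right]; ring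
    simpa using this
  have h1 : ∫ s, ⟪f s, I⟫ ∂μ = ‖I‖ ^ 2 := by
    calc ∫ s, ⟪f s, I⟫ ∂μ = ∫ s, ⟪I, f s⟫ ∂μ := by simp_rw [real_inner_comm]
    _ = ⟪I, I⟫ := integral_inner hf I
    _ = ‖I‖ ^ 2 := real_inner_self_eq_norm_sq I
  have h3 : ∫ s, ⟪f s, I⟫ ∂μ = (∫ s, ⟪f s, K s⟫ ∂μ) + ∫ s, ⟪f s, R s⟫ ∂μ := by
    rw [← integral_add hIK hIR]
    refine integral_congr_ae ?_
    filter_upwards [ae_restrict_mem measurableSet_Ioc] with s hs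
    rw [hsplit s hs, inner_add_right]
  set G : ℝ × ℝ → ℝ := fun p => if p.1 < p.2 then ⟪f p.1, f p.2⟫ else 0 with hG
  have hGint : Integrable G (μ.prod μ) := by
    have haesm : AEStronglyMeasurable G (μ.prod μ) := by
      have hin : AEStronglyMeasurable (fun p : ℝ × ℝ => ⟪f p.1, f p.2⟫) (μ.prod μ) :=
        hfa.comp_fst.inner hfa.comp_snd
      have hset : MeasurableSet {p : ℝ × ℝ | p.1 < p.2} :=
        measurableSet_lt measurable_fst measurable_snd
      have hge : G = Set.indicator {p : ℝ × ℝ | p.1 < p.2} (fun p => ⟪f p.1, f p.2⟫) := by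
        ext p; simp [hG, Set.indicator_apply, Set.mem_setOf_eq]
      rw [hge]; exact hin.indicator hset
    refine Integrable.mono' (Integrable.mul_prod hfnorm hfnorm) haesm (ae_of_all _ fun p => ?_)
    by_cases hp : p.1 < p.2
    · simp only [hG, if_pos hp]
      exact norm_inner_le_norm _ _
    · simp only [hG, if_neg hp, norm_zero]
      positivity
  have hswap : ∫ s, (∫ r, G (s, r) ∂μ) ∂μ = ∫ r, (∫ s, G (s, r) ∂μ) ∂μ :=
    integral_integral_swap hGint
  have hL : ∀ s ∈ Ioc a b, ∫ r, G (s, r) ∂μ = ⟪f s, R s⟫ := by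
    intro s hs
    have heq : ∀ r, G (s, r) = (Ioi s).indicator (fun r => ⟪f s, f r⟫) r := by
      intro r; simp [hG, Set.indicator_apply, Set.mem_Ioi]
    rw [integral_congr_ae (ae_of_all _ heq), hμ, integral_indicator measurableSet_Ioi,
      Measure.restrict_restrict measurableSet_Ioi]
    have hseteq : Ioi s ∩ Ioc a b = Ioc s b := by
      ext x
      simp only [Set.mem_inter_iff, Set.mem_Ioi, Set.mem_Ioc]
      constructor
      · rintro ⟨h1, _, h3⟩; exact ⟨h1, h3⟩
      · rintro ⟨h1, h2⟩; exact ⟨h1, hs.1.trans h1, h2⟩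
    rw [hseteq]
    exact integral_inner (hf.mono_set (Ioc_subset_Ioc_left hs.1.le)) (f s)
  have hRint : ∀ r ∈ Ioc a b, ∫ s, G (s, r) ∂μ = ⟪f r, K r⟫ := by
    intro r hr
    have heq : ∀ s, G (s, r) = (Iio r).indicator (fun s => ⟪f s, f r⟫) s := by
      intro s; simp [hG, Set.indicator_apply, Set.mem_Iio]
    rw [integral_congr_ae (ae_of_all _ heq), hμ, integral_indicator measurableSet_Iio,
      Measure.restrict_restrict measurableSet_Iio]
    have hseteq : Iio r ∩ Ioc a b = Ioo a r := by
      ext x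
      simp only [Set.mem_inter_iff, Set.mem_Iio, Set.mem_Ioc, Set.mem_Ioo]
      constructor
      · rintro ⟨h1, h2, _⟩; exact ⟨h2, h1⟩
      · rintro ⟨h1, h2⟩; exact ⟨h2, h1, (le_of_lt h2).trans hr.2⟩
    rw [hseteq, ← integral_Ioc_eq_integral_Ioo]
    have h2 : IntegrableOn f (Ioc a r) volume := hf.mono_set (Ioc_subset_Ioc_right hr.2)
    calc ∫ s in Ioc a r, ⟪f s, f r⟫ = ∫ s in Ioc a r, ⟪f r, f s⟫ := by simp_rw [real_inner_comm]
    _ = ⟪f r, K r⟫ := integral_inner h2 (f r)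
  have h4 : ∫ s, ⟪f s, R s⟫ ∂μ = ∫ s, ⟪f s, K s⟫ ∂μ := by
    calc ∫ s, ⟪f s, R s⟫ ∂μ = ∫ s, (∫ r, G (s, r) ∂μ) ∂μ := by
          refine integral_congr_ae ?_
          filter_upwards [ae_restrict_mem measurableSet_Ioc] with s hs
          exact (hL s hs).symm
    _ = ∫ r, (∫ s, G (s, r) ∂μ) ∂μ := hswap
    _ = ∫ r, ⟪f r, K r⟫ ∂μ := by
          refine integral_congr_ae ?_
          filter_upwards [ae_restrict_mem measurableSet_Ioc] with r hr
          exact hRint r hr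
  show ‖I‖ ^ 2 = 2 * ∫ s, ⟪f s, K s⟫ ∂μ
  rw [← h1, h3, h4]; ring

set_option maxHeartbeats 1000000 in
theorem stmt_7
    {H : Type*} [NormedAddCommGroup H] [InnerProductSpace ℝ H] [CompleteSpace H]
    (T : H → H)
    (hT : ∀ (y x : H), T x = x → ‖T y - x‖ ≤ ‖y - x‖)
    (hfix : ∃ x : H, T x = x)
    (hdemi : ∀ (x : ℕ → H) (p : H),
      (∀ y : H, Tendsto (fun k => ⟪x k, y⟫) atTop (nhds ⟪p, y⟫)) →
      Tendsto (fun k => ‖T (x k) - x k‖) atTop (nhds 0) → T p = p)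
    (t₀ : ℝ) (ht₀ : 0 < t₀)
    (θ : ℝ → ℝ) (hθ : ∀ t, t₀ ≤ t → 0 ≤ θ t)
    (hθint : ∀ b : ℝ, IntervalIntegrable θ volume t₀ b)
    (u : ℝ → H) (u₀ : H)
    (huint : ∀ t, t₀ ≤ t →
      IntervalIntegrable (fun s => θ s • (T (u s) - u s)) volume t₀ t)
    (husol : ∀ t, t₀ ≤ t →
      u t = u₀ + ∫ s in t₀..t, θ s • (T (u s) - u s))
    (uhat : H) (huhat : T uhat = uhat)
    (hweak : ∀ y : H, Tendsto (fun t => ⟪u t, y⟫) atTop (nhds ⟪uhat, y⟫))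
    (r κ : ℝ) (hr : 0 < r) (hκ : 0 < κ)
    (hsub : ∀ z : H, ‖z - uhat‖ < r →
      Metric.infDist z {x : H | T x = x} ≤ κ * ‖z - T z‖)
    (L : ℝ) (hlim : Tendsto (fun t => ‖u t - uhat‖) atTop (nhds L)) (hLr : L < r) :
    ∃ t' : ℝ, t₀ ≤ t' ∧ ∀ t, t' ≤ t →
      Metric.infDist (u t) {x : H | T x = x} ≤
        ‖u t' - uhat‖ * Real.exp (-(1 / (2 * κ ^ 2)) * ∫ s in t'..t, θ s) := by
  set S : Set H := {x : H | T x = x} with hS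
  have huhatS : uhat ∈ S := huhat
  have hSne : S.Nonempty := ⟨uhat, huhatS⟩
  -- choose t'
  obtain ⟨a₀, ha₀⟩ : ∃ a₀ : ℝ, ∀ t ≥ a₀, ‖u t - uhat‖ < r :=
    eventually_atTop.1 (hlim.eventually_lt_const hLr)
  set t' : ℝ := max t₀ a₀ with ht'def
  have ht't₀ : t₀ ≤ t' := le_max_left _ _
  have hr' : ∀ t, t' ≤ t → ‖u t - uhat‖ < r := fun t ht => ha₀ t ((le_max_right _ _).trans ht)
  -- basic integrability
  have hwint : ∀ t₁ t₂, t₀ ≤ t₁ → t₀ ≤ t₂ →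
      IntervalIntegrable (fun s => θ s • (T (u s) - u s)) volume t₁ t₂ :=
    fun t₁ t₂ h1 h2 => (huint t₁ h1).symm.trans (huint t₂ h2)
  have hθint2 : ∀ t₁ t₂ : ℝ, IntervalIntegrable θ volume t₁ t₂ :=
    fun t₁ t₂ => (hθint t₁).symm.trans (hθint t₂)
  have hudiff : ∀ t₁ t₂, t₀ ≤ t₁ → t₀ ≤ t₂ →
      u t₂ - u t₁ = ∫ s in t₁..t₂, θ s • (T (u s) - u s) := by
    intro t₁ t₂ h1 h2
    rw [husol t₁ h1, husol t₂ h2,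
      ← intervalIntegral.integral_add_adjacent_intervals (huint t₁ h1) (hwint t₁ t₂ h1 h2)]
    abel
  -- continuity of u on compacts of [t₀, ∞)
  have hucont : ∀ t₁ t₂, t₀ ≤ t₁ → ContinuousOn u (Icc t₁ t₂) := by
    intro t₁ t₂ h1
    rcases le_or_gt t₁ t₂ with h12 | h12
    · have hcont : ContinuousOn (fun x => ∫ s in t₁..x, θ s • (T (u s) - u s)) (Icc t₁ t₂) := by
        have h := intervalIntegral.continuousOn_primitive_interval (a := t₁) (b := t₂)
          (f := fun s => θ s • (T (u s) - u s)) (μ := volume) ?_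
        · rwa [uIcc_of_le h12] at h
        · rw [uIcc_of_le h12]
          exact (intervalIntegrable_iff_integrableOn_Icc_of_le h12).1
            (hwint t₁ t₂ h1 (h1.trans h12))
      have heq : ∀ x ∈ Icc t₁ t₂, u x = u t₁ + ∫ s in t₁..x, θ s • (T (u s) - u s) := by
        intro x hx
        have h := hudiff t₁ x h1 (h1.trans hx.1)
        calc u x = u t₁ + (u x - u t₁) := by abel
        _ = u t₁ + ∫ s in t₁..x, θ s • (T (u s) - u s) := by rw [h]
      exact (continuousOn_const.add hcont).congr heq
    · rw [Icc_eq_empty (not_le.2 h12)]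
      exact continuousOn_empty u
  -- quasi-nonexpansiveness inequality
  have hqne : ∀ (y p : H), T p = p → ⟪T y - y, y - p⟫ ≤ -(1/2) * ‖T y - y‖^2 := by
    intro y p hp
    have h1 : ‖T y - p‖ ≤ ‖y - p‖ := hT y p hp
    have h2 : ‖(y - p) + (T y - y)‖^2 ≤ ‖y - p‖^2 := by
      have he : (y - p) + (T y - y) = T y - p := by abel
      rw [he]
      exact pow_le_pow_left₀ (norm_nonneg _) h1 2
    rw [norm_add_sq_real] at h2
    have h3 : ⟪y - p, T y - y⟫ = ⟪T y - y, y - p⟫ := real_inner_comm _ _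
    nlinarith [h2]
  -- integrability of the inner product integrand
  have hinner_int : ∀ (p : H) (t₁ t₂ : ℝ), t₀ ≤ t₁ → t₁ ≤ t₂ →
      IntervalIntegrable (fun s => ⟪θ s • (T (u s) - u s), u s - p⟫) volume t₁ t₂ := by
    intro p t₁ t₂ h1 h12
    have hw := hwint t₁ t₂ h1 (h1.trans h12)
    have hwI : IntegrableOn (fun s => θ s • (T (u s) - u s)) (Ioc t₁ t₂) volume :=
      (intervalIntegrable_iff_integrableOn_Ioc_of_le h12).1 hw
    rw [intervalIntegrable_iff_integrableOn_Ioc_of_le h12]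
    have hcont : ContinuousOn (fun s => u s - p) (Icc t₁ t₂) :=
      (hucont t₁ t₂ h1).sub continuousOn_const
    obtain ⟨M, hM⟩ := (isCompact_Icc (a := t₁) (b := t₂)).exists_bound_of_continuousOn hcont
    refine Integrable.mono' (hwI.norm.mul_const M)
      (hwI.aestronglyMeasurable.inner
        ((hcont.mono Ioc_subset_Icc_self).aestronglyMeasurable measurableSet_Ioc)) ?_
    filter_upwards [ae_restrict_mem measurableSet_Ioc] with s hs
    calc ‖⟪θ s • (T (u s) - u s), u s - p⟫‖ ≤ ‖θ s • (T (u s) - u s)‖ * ‖u s - p‖ :=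
          norm_inner_le_norm _ _
    _ ≤ ‖θ s • (T (u s) - u s)‖ * M :=
          mul_le_mul_of_nonneg_left (hM s (Ioc_subset_Icc_self hs)) (norm_nonneg _)
  -- energy identity
  have henergy : ∀ (p : H) (t₁ t₂ : ℝ), t₀ ≤ t₁ → t₁ ≤ t₂ →
      ‖u t₂ - p‖^2 = ‖u t₁ - p‖^2
        + 2 * ∫ s in Ioc t₁ t₂, ⟪θ s • (T (u s) - u s), u s - p⟫ := by
    intro p t₁ t₂ h1 h12
    have h2 : t₀ ≤ t₂ := h1.trans h12
    have hw := hwint t₁ t₂ h1 h2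
    have hwI : IntegrableOn (fun s => θ s • (T (u s) - u s)) (Ioc t₁ t₂) volume :=
      (intervalIntegrable_iff_integrableOn_Ioc_of_le h12).1 hw
    have hW : u t₂ - u t₁ = ∫ s in Ioc t₁ t₂, θ s • (T (u s) - u s) := by
      rw [hudiff t₁ t₂ h1 h2, intervalIntegral.integral_of_le h12]
    have hkey : ∀ s ∈ Ioc t₁ t₂, (∫ r in Ioc t₁ s, θ r • (T (u r) - u r)) = u s - u t₁ := by
      intro s hs
      rw [← intervalIntegral.integral_of_le hs.1.le, ← hudiff t₁ s h1 (h1.trans hs.1.le)]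
    have hL1 := sq_norm_setIntegral (a := t₁) (b := t₂) hwI
    have hL1' : ‖∫ s in Ioc t₁ t₂, θ s • (T (u s) - u s)‖^2
        = 2 * ∫ s in Ioc t₁ t₂, ⟪θ s • (T (u s) - u s), u s - u t₁⟫ := by
      rw [hL1]
      congr 1
      refine setIntegral_congr_fun measurableSet_Ioc fun s hs => ?_
      rw [hkey s hs]
    have hi1 : IntegrableOn (fun s => ⟪θ s • (T (u s) - u s), u s - u t₁⟫) (Ioc t₁ t₂) volume :=
      (intervalIntegrable_iff_integrableOn_Ioc_of_le h12).1 (hinner_int (u t₁) t₁ t₂ h1 h12)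
    have hi2 : IntegrableOn (fun s => ⟪θ s • (T (u s) - u s), u t₁ - p⟫) (Ioc t₁ t₂) volume :=
      Integrable.mono' (hwI.norm.mul_const ‖u t₁ - p‖)
        (hwI.aestronglyMeasurable.inner aestronglyMeasurable_const)
        (ae_of_all _ fun s => norm_inner_le_norm _ _)
    have hcross : ⟪u t₁ - p, u t₂ - u t₁⟫
        = ∫ s in Ioc t₁ t₂, ⟪θ s • (T (u s) - u s), u t₁ - p⟫ := by
      rw [hW]
      calc ⟪u t₁ - p, ∫ s in Ioc t₁ t₂, θ s • (T (u s) - u s)⟫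
          = ∫ s in Ioc t₁ t₂, ⟪u t₁ - p, θ s • (T (u s) - u s)⟫ :=
            (integral_inner hwI _).symm
      _ = ∫ s in Ioc t₁ t₂, ⟪θ s • (T (u s) - u s), u t₁ - p⟫ := by
            simp_rw [real_inner_comm]
    have hsum : (∫ s in Ioc t₁ t₂, ⟪θ s • (T (u s) - u s), u t₁ - p⟫)
        + (∫ s in Ioc t₁ t₂, ⟪θ s • (T (u s) - u s), u s - u t₁⟫)
        = ∫ s in Ioc t₁ t₂, ⟪θ s • (T (u s) - u s), u s - p⟫ := by
      rw [← integral_add hi2 hi1]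
      refine integral_congr_ae (ae_of_all _ fun s => ?_)
      show ⟪θ s • (T (u s) - u s), u t₁ - p⟫ + ⟪θ s • (T (u s) - u s), u s - u t₁⟫
          = ⟪θ s • (T (u s) - u s), u s - p⟫
      rw [← inner_add_right]
      congr 1
      abel
    have hexp : u t₂ - p = (u t₁ - p) + (u t₂ - u t₁) := by abel
    rw [hexp, norm_add_sq_real, hcross, hW, hL1']
    linarith [hsum]
  have henergyI : ∀ (p : H) (t₁ t₂ : ℝ), t₀ ≤ t₁ → t₁ ≤ t₂ →
      ‖u t₂ - p‖^2 = ‖u t₁ - p‖^2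
        + 2 * ∫ s in t₁..t₂, ⟪θ s • (T (u s) - u s), u s - p⟫ := by
    intro p t₁ t₂ h1 h12
    rw [intervalIntegral.integral_of_le h12]
    exact henergy p t₁ t₂ h1 h12
  -- monotonicity of infDist
  have hdmono : ∀ t₁ t₂, t₀ ≤ t₁ → t₁ ≤ t₂ →
      Metric.infDist (u t₂) S ≤ Metric.infDist (u t₁) S := by
    intro t₁ t₂ h1 h12
    refine le_infDist_of hSne fun p hp => ?_
    have hnorm : ‖u t₂ - p‖ ≤ ‖u t₁ - p‖ := by
      have he := henergy p t₁ t₂ h1 h12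
      have hint_np : (∫ s in Ioc t₁ t₂, ⟪θ s • (T (u s) - u s), u s - p⟫) ≤ 0 := by
        refine integral_nonpos_of_ae ?_
        filter_upwards [ae_restrict_mem measurableSet_Ioc] with s hs
        have hθs : 0 ≤ θ s := hθ s (h1.trans hs.1.le)
        have hq := hqne (u s) p hp
        have hX : ⟪T (u s) - u s, u s - p⟫ ≤ 0 := by nlinarith [sq_nonneg ‖T (u s) - u s‖]
        have hsl : ⟪θ s • (T (u s) - u s), u s - p⟫ = θ s * ⟪T (u s) - u s, u s - p⟫ :=
          real_inner_smul_left _ _ _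
        rw [hsl]
        exact mul_nonpos_of_nonneg_of_nonpos hθs hX
      have hsq : ‖u t₂ - p‖^2 ≤ ‖u t₁ - p‖^2 := by linarith [he]
      have := Real.sqrt_le_sqrt hsq
      rwa [Real.sqrt_sq (norm_nonneg _), Real.sqrt_sq (norm_nonneg _)] at this
    calc Metric.infDist (u t₂) S ≤ dist (u t₂) p := Metric.infDist_le_dist_of_mem hp
    _ = ‖u t₂ - p‖ := by rw [dist_eq_norm]
    _ ≤ ‖u t₁ - p‖ := hnorm
    _ = dist (u t₁) p := (dist_eq_norm _ _).symm
  -- the key quantitative inequality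
  have hkeyK : ∀ t₁ t₂, t' ≤ t₁ → t₁ ≤ t₂ →
      Metric.infDist (u t₂) S * Real.sqrt (1 + (∫ s in t₁..t₂, θ s) / κ^2)
        ≤ Metric.infDist (u t₁) S := by
    intro t₁ t₂ h1 h12
    have h1₀ : t₀ ≤ t₁ := ht't₀.trans h1
    set Θ := ∫ s in t₁..t₂, θ s with hΘdef
    have hΘ0 : 0 ≤ Θ := intervalIntegral.integral_nonneg h12 (fun s hs => hθ s (h1₀.trans hs.1))
    set D := Metric.infDist (u t₂) S with hD
    have hD0 : 0 ≤ D := Metric.infDist_nonneg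
    have hκ2 : (0:ℝ) < κ^2 := by positivity
    refine le_infDist_of hSne fun p hp => ?_
    rw [dist_eq_norm]
    have he := henergyI p t₁ t₂ h1₀ h12
    have hmono_int : (∫ s in t₁..t₂, ⟪θ s • (T (u s) - u s), u s - p⟫)
        ≤ ∫ s in t₁..t₂, (-(D^2/(2*κ^2))) * θ s := by
      refine intervalIntegral.integral_mono_on h12 (hinner_int p t₁ t₂ h1₀ h12)
        ((hθint2 t₁ t₂).const_mul _) ?_
      intro s hs
      have hθs : 0 ≤ θ s := hθ s (h1₀.trans hs.1)
      have hq := hqne (u s) p hp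
      have hds : D ≤ Metric.infDist (u s) S := hdmono s t₂ (h1₀.trans hs.1) hs.2
      have hsubs : Metric.infDist (u s) S ≤ κ * ‖u s - T (u s)‖ :=
        hsub (u s) (hr' s (h1.trans hs.1))
      have hDκ : D ≤ κ * ‖T (u s) - u s‖ := by
        rw [← norm_sub_rev (u s)]
        exact hds.trans hsubs
      have hv0 : (0:ℝ) ≤ ‖T (u s) - u s‖ := norm_nonneg _
      have hD2 : D^2 ≤ κ^2 * ‖T (u s) - u s‖^2 := by nlinarith
      have hX : ⟪T (u s) - u s, u s - p⟫ ≤ -(D^2/(2*κ^2)) := by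
        have hhalf : D^2/(2*κ^2) ≤ (1/2) * ‖T (u s) - u s‖^2 := by
          rw [div_le_iff₀ (by positivity : (0:ℝ) < 2*κ^2)]
          nlinarith
        linarith [hq]
      have hsl : ⟪θ s • (T (u s) - u s), u s - p⟫ = θ s * ⟪T (u s) - u s, u s - p⟫ :=
        real_inner_smul_left _ _ _
      rw [hsl]
      calc θ s * ⟪T (u s) - u s, u s - p⟫ ≤ θ s * (-(D^2/(2*κ^2))) :=
            mul_le_mul_of_nonneg_left hX hθs
      _ = (-(D^2/(2*κ^2))) * θ s := mul_comm _ _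
    rw [intervalIntegral.integral_const_mul] at hmono_int
    have hDle : D^2 ≤ ‖u t₂ - p‖^2 := by
      have hdle : D ≤ ‖u t₂ - p‖ := by
        rw [← dist_eq_norm]
        exact Metric.infDist_le_dist_of_mem hp
      exact pow_le_pow_left₀ hD0 hdle 2
    have he1 : D^2 * (1 + Θ/κ^2) = D^2 + 2*((D^2/(2*κ^2))*Θ) := by
      field_simp
    have hfinal2 : D^2 * (1 + Θ/κ^2) ≤ ‖u t₁ - p‖^2 := by
      rw [he1]
      linarith [he, hmono_int, hDle]
    have h1Θ : (0:ℝ) ≤ 1 + Θ/κ^2 := by positivity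
    calc D * Real.sqrt (1 + Θ/κ^2) = Real.sqrt (D^2 * (1 + Θ/κ^2)) := by
          rw [Real.sqrt_mul (sq_nonneg D), Real.sqrt_sq hD0]
    _ ≤ Real.sqrt (‖u t₁ - p‖^2) := Real.sqrt_le_sqrt hfinal2
    _ = ‖u t₁ - p‖ := Real.sqrt_sq (norm_nonneg _)
  -- conclusion
  refine ⟨t', ht't₀, fun t ht => ?_⟩
  set Θt := ∫ s in t'..t, θ s with hΘtdef
  have hΘ0 : 0 ≤ Θt :=
    intervalIntegral.integral_nonneg ht (fun s hs => hθ s (ht't₀.trans hs.1))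
  have hd't : Metric.infDist (u t') S ≤ ‖u t' - uhat‖ := by
    rw [← dist_eq_norm]
    exact Metric.infDist_le_dist_of_mem huhatS
  have hexp0 : (0:ℝ) < Real.exp (-(1 / (2 * κ ^ 2)) * Θt) := Real.exp_pos _
  suffices hsuff : Metric.infDist (u t) S
      ≤ Metric.infDist (u t') S * Real.exp (-(1 / (2 * κ ^ 2)) * Θt) by
    exact hsuff.trans (mul_le_mul_of_nonneg_right hd't hexp0.le)
  rcases eq_or_lt_of_le hΘ0 with hΘz | hΘpos
  · rw [← hΘz, mul_zero, Real.exp_zero, mul_one]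
    exact hdmono t' t ht't₀ ht
  · set x := Θt / κ^2 with hxdef
    have hκ2 : (0:ℝ) < κ^2 := by positivity
    have hx : 0 < x := div_pos hΘpos hκ2
    have hn : ∀ n : ℕ, 1 ≤ n →
        Metric.infDist (u t) S ^2 * (1 + x/n)^n ≤ Metric.infDist (u t') S ^2 := by
      intro n hn1
      have hn0 : (0:ℝ) < n := by exact_mod_cast Nat.lt_of_lt_of_le Nat.zero_lt_one hn1
      have hΦcont : ContinuousOn (fun y => ∫ s in t'..y, θ s) (Icc t' t) := by
        have h := intervalIntegral.continuousOn_primitive_interval (a := t') (b := t)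
          (f := θ) (μ := volume) ?_
        · rwa [uIcc_of_le ht] at h
        · rw [uIcc_of_le ht]
          exact (intervalIntegrable_iff_integrableOn_Icc_of_le ht).1 (hθint2 t' t)
      have hΦadd : ∀ y z : ℝ, t' ≤ y → y ≤ z →
          (∫ s in t'..z, θ s) - (∫ s in t'..y, θ s) = ∫ s in y..z, θ s := by
        intro y z hy hyz
        rw [← intervalIntegral.integral_add_adjacent_intervals (hθint2 t' y) (hθint2 y z)]
        ring
      have hΦmono : ∀ y z : ℝ, t' ≤ y → y ≤ z → z ≤ t →
          (∫ s in t'..y, θ s) ≤ (∫ s in t'..z, θ s) := by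
        intro y z hy hyz _
        have h0 : 0 ≤ ∫ s in y..z, θ s :=
          intervalIntegral.integral_nonneg hyz
            (fun s hs => hθ s ((ht't₀.trans hy).trans hs.1))
        linarith [hΦadd y z hy hyz]
      have hIVT : ∀ i : ℕ, i ≤ n → ∃ y ∈ Icc t' t, (∫ s in t'..y, θ s) = i * Θt / n := by
        intro i hi
        have hmem : (i : ℝ) * Θt / n
            ∈ Icc ((fun y => ∫ s in t'..y, θ s) t') ((fun y => ∫ s in t'..y, θ s) t) := by
          simp only [intervalIntegral.integral_same]
          constructor
          · positivity
          · rw [div_le_iff₀ hn0]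
            have hin : (i:ℝ) ≤ n := Nat.cast_le.2 hi
            nlinarith
        obtain ⟨y, hy, hΦy⟩ := intermediate_value_Icc ht hΦcont hmem
        exact ⟨y, hy, hΦy⟩
      have h1xn : (0:ℝ) ≤ 1 + x/n := by
        have := hx.le
        positivity
      have hind : ∀ i : ℕ, i ≤ n → ∀ y ∈ Icc t' t, (∫ s in t'..y, θ s) = i * Θt / n →
          Metric.infDist (u y) S ^2 * (1 + x/n)^i ≤ Metric.infDist (u t') S ^2 := by
        intro i
        induction i with
        | zero =>
          intro _ y hy _
          simp only [pow_zero, mul_one]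
          exact pow_le_pow_left₀ Metric.infDist_nonneg (hdmono t' y ht't₀ hy.1) 2
        | succ i ih =>
          intro hi y hy hΦy
          obtain ⟨z, hz, hΦz⟩ := hIVT i (Nat.le_of_succ_le hi)
          have hzy : z ≤ y := by
            by_contra hzy
            push_neg at hzy
            have hle := hΦmono y z hy.1 hzy.le hz.2
            rw [hΦy, hΦz] at hle
            have : ((i:ℝ)+1) * Θt / n ≤ (i:ℝ) * Θt / n := by push_cast at hle ⊢; linarith
            rw [div_le_div_iff₀ hn0 hn0] at this
            nlinarith
          have hint_yz : (∫ s in z..y, θ s) = Θt / n := by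
            have h := hΦadd z y hz.1 hzy
            rw [hΦy, hΦz] at h
            rw [← h]
            push_cast
            ring
          have hK := hkeyK z y hz.1 hzy
          rw [hint_yz] at hK
          have hxeq : 1 + (Θt/n)/κ^2 = 1 + x/n := by rw [hxdef]; ring
          have h1' : (0:ℝ) ≤ 1 + (Θt/n)/κ^2 := by rw [hxeq]; exact h1xn
          have hsq : Metric.infDist (u y) S ^2 * (1 + x/n)
              ≤ Metric.infDist (u z) S ^2 := by
            have hsqle := pow_le_pow_left₀
              (mul_nonneg Metric.infDist_nonneg (Real.sqrt_nonneg _)) hK 2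
            rw [mul_pow, Real.sq_sqrt h1', hxeq] at hsqle
            exact hsqle
          have hih := ih (Nat.le_of_succ_le hi) z hz hΦz
          have hpow0 : (0:ℝ) ≤ (1 + x/n)^i := pow_nonneg h1xn i
          calc Metric.infDist (u y) S ^2 * (1 + x/n)^(i+1)
              = (Metric.infDist (u y) S ^2 * (1 + x/n)) * (1 + x/n)^i := by ring
          _ ≤ Metric.infDist (u z) S ^2 * (1 + x/n)^i :=
              mul_le_mul_of_nonneg_right hsq hpow0
          _ ≤ Metric.infDist (u t') S ^2 := hih
      have hΦt : (∫ s in t'..t, θ s) = n * Θt / n := by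
        rw [← hΘtdef]
        field_simp
      exact hind n le_rfl t ⟨ht, le_rfl⟩ hΦt
    have htend : Tendsto (fun n : ℕ => Metric.infDist (u t) S ^2 * (1 + x/n)^n) atTop
        (nhds (Metric.infDist (u t) S ^2 * Real.exp x)) :=
      (Real.tendsto_one_add_div_pow_exp x).const_mul _
    have hlimle : Metric.infDist (u t) S ^2 * Real.exp x ≤ Metric.infDist (u t') S ^2 :=
      le_of_tendsto htend (eventually_atTop.2 ⟨1, fun n hn' => hn n hn'⟩)
    set A := Metric.infDist (u t') S * Real.exp (-(1 / (2 * κ ^ 2)) * Θt) with hA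
    have hA0 : 0 ≤ A := mul_nonneg Metric.infDist_nonneg (Real.exp_pos _).le
    have hsqA : Metric.infDist (u t) S ^2 ≤ A^2 := by
      have hexpA : A^2 = Metric.infDist (u t') S ^2 * Real.exp (-x) := by
        rw [hA, mul_pow, sq (Real.exp _), ← Real.exp_add]
        congr 1
        rw [hxdef]
        field_simp
        ring
      rw [hexpA]
      have hmul := mul_le_mul_of_nonneg_right hlimle (Real.exp_pos (-x)).le
      have hee : Real.exp x * Real.exp (-x) = 1 := by
        rw [← Real.exp_add]; simp
      nlinarith [hmul, hee]
    calc Metric.infDist (u t) S = Real.sqrt (Metric.infDist (u t) S ^2) :=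
          (Real.sqrt_sq Metric.infDist_nonneg).symm
    _ ≤ Real.sqrt (A^2) := Real.sqrt_le_sqrt hsqA
    _ = A := Real.sqrt_sq hA0
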